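/- Let (X_{ij})_{i,j∈ℤ} be a stationary m-dependent random field that is regularly varying with index α∈(0,2). Let (r_n) be a sequence of positive integers with r_n→∞ and r_n/n→0, restricting n to integers for which k_n:=n/r_n is an integer, and fix ε>0. Then, as n→∞: (i) ℙ(there exist 1≤i,j,k≤k_n with j≠k such that ‖B̂_{ij}‖_max>ε and ‖B̂_{ik}‖_max>ε) → 0; and (ii) ℙ(there exists 1≤i≤k_n such that ‖B̂_{ii}‖_max>ε) → 0. -/

import Mathlib

open MeasureTheory ProbabilityTheory Filter Matrix

noncomputable section

/-- A real-valued random field indexed by `ℤ × ℤ` is stationary if its finite-dimensional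
distributions are invariant under all shifts of `ℤ²`. -/
def IsStationaryField {Ω : Type*} [MeasurableSpace Ω] (μ : Measure Ω)
    (X : ℤ × ℤ → Ω → ℝ) : Prop :=
  ∀ a b : ℤ,
    Measure.map (fun ω => fun p : ℤ × ℤ => X (p.1 + a, p.2 + b) ω) μ =
      Measure.map (fun ω => fun p : ℤ × ℤ => X p ω) μ

/-- A random field `X` is `m`-dependent if any two subfamilies whose index sets are separated
by a (sup-)distance greater than `m` are independent. -/
def IsMDependent {Ω : Type*} [MeasurableSpace Ω] (μ : Measure Ω)
    (X : ℤ × ℤ → Ω → ℝ) (m : ℕ) : Prop :=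
  ∀ A B : Set (ℤ × ℤ),
    (∀ p ∈ A, ∀ q ∈ B, (m : ℤ) < max |p.1 - q.1| |p.2 - q.2|) →
    IndepFun (fun ω => fun p : A => X p.1 ω) (fun ω => fun q : B => X q.1 ω) μ

/-- A positive function is slowly varying if `L (c x) / L x → 1` as `x → ∞` for every `c > 0`. -/
def SlowlyVarying (L : ℝ → ℝ) : Prop :=
  (∀ x : ℝ, 0 < x → 0 < L x) ∧
    ∀ c : ℝ, 0 < c → Tendsto (fun x => L (c * x) / L x) atTop (nhds 1)

/-- The field is regularly varying with index `α`: `ℙ(|X₀₀| > x) = x^(-α) L(x)`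
for a slowly varying `L`. -/
def IsRegVarying {Ω : Type*} [MeasurableSpace Ω] (μ : Measure Ω)
    (X : ℤ × ℤ → Ω → ℝ) (α : ℝ) : Prop :=
  ∃ L : ℝ → ℝ, SlowlyVarying L ∧
    ∀ x : ℝ, 0 < x → (μ {ω | x < |X (0, 0) ω|}).toReal = x ^ (-α) * L x

/-- The symmetrized field `X̂`. -/
def symX {Ω : Type*} (X : ℤ × ℤ → Ω → ℝ) (i j : ℤ) (ω : Ω) : ℝ :=
  if i ≤ j then X (i, j) ω else X (j, i) ω

/-- `(a_n)` is a normalizing sequence: `a_n → ∞` and `n ℙ(|X₀₀| > a_n) → 1`. -/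
def IsNormSeq {Ω : Type*} [MeasurableSpace Ω] (μ : Measure Ω)
    (X : ℤ × ℤ → Ω → ℝ) (a : ℕ → ℝ) : Prop :=
  Tendsto a atTop atTop ∧
    Tendsto (fun n : ℕ => (n : ℝ) * (μ {ω | a n < |X (0, 0) ω|}).toReal) atTop (nhds 1)

/-- The Wigner matrix `Â_n = (X̂_{ij} / b)_{1 ≤ i,j ≤ n}`. -/
def wignerMat {Ω : Type*} (X : ℤ × ℤ → Ω → ℝ) (b : ℝ) (n : ℕ) (ω : Ω) :
    Matrix (Fin n) (Fin n) ℝ :=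
  Matrix.of fun i j => symX X ((i : ℕ) + 1 : ℤ) ((j : ℕ) + 1 : ℤ) ω / b

/-- The `p × n` data matrix `A = (X_{ij} / c)_{1 ≤ i ≤ p, 1 ≤ j ≤ n}`. -/
def dataMat {Ω : Type*} (X : ℤ × ℤ → Ω → ℝ) (c : ℝ) (p n : ℕ) (ω : Ω) :
    Matrix (Fin p) (Fin n) ℝ :=
  Matrix.of fun i j => X (((i : ℕ) + 1 : ℤ), ((j : ℕ) + 1 : ℤ)) ω / c

/-- Entrywise truncation keeping the entries of absolute value `> t` : `M^{>t}`. -/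
def truncGt {p q : ℕ} (M : Matrix (Fin p) (Fin q) ℝ) (t : ℝ) : Matrix (Fin p) (Fin q) ℝ :=
  Matrix.of fun i j => if t < |M i j| then M i j else 0

/-- `M^{<t} := M - M^{>t}`, i.e. the entries of absolute value `≤ t`. -/
def truncLe {p q : ℕ} (M : Matrix (Fin p) (Fin q) ℝ) (t : ℝ) : Matrix (Fin p) (Fin q) ℝ :=
  M - truncGt M t

/-- The spectral norm (largest singular value) of a rectangular real matrix, realized as the
operator norm of the induced map between Euclidean spaces. -/
def specNorm {p q : ℕ} (M : Matrix (Fin p) (Fin q) ℝ) : ℝ :=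
  ‖LinearMap.toContinuousLinearMap (Matrix.toEuclideanLin M)‖

/-- The event that the `(k,l)` block (of size `r × r`, `1`-based block indices) of the
matrix `(X̂_{ij}/b)` has max-norm `> ε`. -/
def blockExceed {Ω : Type*} (X : ℤ × ℤ → Ω → ℝ) (b : ℝ) (r k l : ℕ) (ε : ℝ) (ω : Ω) : Prop :=
  ∃ i ∈ Finset.Ioc ((k - 1) * r) (k * r), ∃ j ∈ Finset.Ioc ((l - 1) * r) (l * r),
    ε < |symX X (i : ℤ) (j : ℤ) ω / b|

/-- `r_n = n^(1-η)` (as a natural number, via the floor). -/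
def rseq (η : ℝ) (n : ℕ) : ℕ := ⌊(n : ℝ) ^ (1 - η)⌋₊

/-- `k_n = n^η` (as a natural number, via the floor). -/
def kseq (η : ℝ) (n : ℕ) : ℕ := ⌊(n : ℝ) ^ η⌋₊

/-- The set of `n` for which `n^(1-η)` and `n^η` are integers. -/
def goodSet (η : ℝ) : Set ℕ :=
  {n | ((rseq η n : ℝ) = (n : ℝ) ^ (1 - η)) ∧ ((kseq η n : ℝ) = (n : ℝ) ^ η)}

/-- `lam` is an eigenvalue of the real matrix `M`. -/
def IsEigenvalue {n : Type*} [Fintype n] (M : Matrix n n ℝ) (lam : ℝ) : Prop :=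
  ∃ v : n → ℝ, v ≠ 0 ∧ M.mulVec v = lam • v

/-- The multiset of singular values of a rectangular real matrix: the square roots of the
eigenvalues of `Mᵀ M` (`= Mᴴ M` over `ℝ`), with multiplicity. -/
def singularValues {p q : ℕ} (M : Matrix (Fin p) (Fin q) ℝ) : Multiset ℝ :=
  Finset.univ.val.map fun i =>
    Real.sqrt ((show (Mᵀ * M).IsHermitian by
      unfold Matrix.IsHermitian
      simp [Matrix.conjTranspose_eq_transpose_of_trivial, Matrix.transpose_mul]).eigenvalues i)

/-- The eigenvalues of a real symmetric matrix, sorted increasingly (as a list);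
junk value for non-symmetric matrices. -/
def sortedEigs {N : ℕ} (M : Matrix (Fin N) (Fin N) ℝ) : List ℝ :=
  if h : M.IsHermitian then (Finset.univ.val.map h.eigenvalues).sort (· ≤ ·)
  else List.replicate N 0

/-- The index of row `i` of block-row `a` inside a `(k*r) × (k*r)` matrix partitioned
into `r × r` blocks. -/
def blkIdx {k r : ℕ} (a : Fin k) (i : Fin r) : Fin (k * r) :=
  ⟨a.1 * r + i.1, by
    have hi := i.2
    have ha := a.2
    have h1 : a.1 * r + i.1 < (a.1 + 1) * r := by nlinarith
    have h2 : (a.1 + 1) * r ≤ k * r := by nlinarith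
    exact lt_of_lt_of_le h1 h2⟩

/-- The `(a,b)` block (of size `r × r`) of a `(k*r) × (k*r)` matrix. -/
def blockOf {k r : ℕ} (H : Matrix (Fin (k * r)) (Fin (k * r)) ℝ) (a b : Fin k) :
    Matrix (Fin r) (Fin r) ℝ :=
  Matrix.of fun i j => H (blkIdx a i) (blkIdx b j)

/-- The `n × n` matrix with entries `X̂_{ij} 1{|X̂_{ij}| < t}` (not yet normalized). -/
def truncSymMat {Ω : Type*} (X : ℤ × ℤ → Ω → ℝ) (n : ℕ) (t : ℝ) (ω : Ω) :
    Matrix (Fin n) (Fin n) ℝ :=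
  Matrix.of fun i j =>
    if |symX X ((i : ℕ) + 1 : ℤ) ((j : ℕ) + 1 : ℤ) ω| < t
    then symX X ((i : ℕ) + 1 : ℤ) ((j : ℕ) + 1 : ℤ) ω else 0


/-! ### Auxiliary lemmas -/

section RVaux

open Finset

lemma rv_lawEq {Ω : Type*} [MeasurableSpace Ω] (μ : Measure Ω)
    (X : ℤ × ℤ → Ω → ℝ) (hmeas : ∀ p, Measurable (X p))
    (hstat : IsStationaryField μ X) (p : ℤ × ℤ) :
    Measure.map (X p) μ = Measure.map (X (0, 0)) μ := by
  have h := hstat p.1 p.2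
  have hF1 : Measurable (fun ω => fun q : ℤ × ℤ => X (q.1 + p.1, q.2 + p.2) ω) :=
    measurable_pi_lambda _ (fun q => hmeas _)
  have hF2 : Measurable (fun ω => fun q : ℤ × ℤ => X q ω) :=
    measurable_pi_lambda _ (fun q => hmeas _)
  have he : Measurable (fun g : ℤ × ℤ → ℝ => g (0, 0)) := measurable_pi_apply _
  have h2 := congrArg (Measure.map (fun g : ℤ × ℤ → ℝ => g (0, 0))) h
  rw [Measure.map_map he hF1, Measure.map_map he hF2] at h2
  have e1 : ((fun g : ℤ × ℤ → ℝ => g (0, 0)) ∘ fun ω q => X (q.1 + p.1, q.2 + p.2) ω) = X p := by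
    funext ω; simp
  have e2 : ((fun g : ℤ × ℤ → ℝ => g (0, 0)) ∘ fun ω (q : ℤ × ℤ) => X q ω) = X (0, 0) := rfl
  rw [e1, e2] at h2
  exact h2

lemma rv_tailLim {Ω : Type*} [MeasurableSpace Ω] (μ : Measure Ω)
    (X : ℤ × ℤ → Ω → ℝ) (α : ℝ) (hreg : IsRegVarying μ X α)
    (a : ℕ → ℝ) (ha : IsNormSeq μ X a) (ε : ℝ) (hε : 0 < ε) :
    Tendsto (fun n : ℕ => (n : ℝ) ^ 2 * (μ {ω | ε * a (n ^ 2) < |X (0, 0) ω|}).toReal)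
      atTop (nhds (ε ^ (-α))) := by
  obtain ⟨L, ⟨hLpos, hLslow⟩, hform⟩ := hreg
  have hsq : Tendsto (fun n : ℕ => n ^ 2) atTop atTop :=
    tendsto_atTop_mono (fun n => Nat.le_self_pow two_ne_zero n) tendsto_id
  have hb : Tendsto (fun n : ℕ => a (n ^ 2)) atTop atTop := ha.1.comp hsq
  have h1 : Tendsto (fun n : ℕ =>
      ((n ^ 2 : ℕ) : ℝ) * (μ {ω | a (n ^ 2) < |X (0, 0) ω|}).toReal) atTop (nhds 1) :=
    ha.2.comp hsq
  have hratio : Tendsto (fun n : ℕ => L (ε * a (n ^ 2)) / L (a (n ^ 2))) atTop (nhds 1) :=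
    (hLslow ε hε).comp hb
  have hpos : ∀ᶠ n : ℕ in atTop, 0 < a (n ^ 2) := hb.eventually (eventually_gt_atTop 0)
  have key : Tendsto (fun n : ℕ =>
      (((n ^ 2 : ℕ) : ℝ) * (μ {ω | a (n ^ 2) < |X (0, 0) ω|}).toReal) *
        (ε ^ (-α) * (L (ε * a (n ^ 2)) / L (a (n ^ 2))))) atTop
      (nhds (1 * (ε ^ (-α) * 1))) := h1.mul (tendsto_const_nhds.mul hratio)
  rw [one_mul, mul_one] at key
  refine key.congr' ?_
  filter_upwards [hpos] with n hn
  have hεa : 0 < ε * a (n ^ 2) := mul_pos hε hn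
  rw [hform _ hn, hform _ hεa, Real.mul_rpow hε.le hn.le]
  have hLa : L (a (n ^ 2)) ≠ 0 := ne_of_gt (hLpos _ hn)
  push_cast
  field_simp

lemma rv_indepPair {Ω : Type*} [MeasurableSpace Ω] (μ : Measure Ω)
    (X : ℤ × ℤ → Ω → ℝ) (m : ℕ) (hdep : IsMDependent μ X m)
    (p q : ℤ × ℤ) (h : (m : ℤ) < max |p.1 - q.1| |p.2 - q.2|)
    (s t : Set ℝ) (hs : MeasurableSet s) (ht : MeasurableSet t) :
    μ (X p ⁻¹' s ∩ X q ⁻¹' t) = μ (X p ⁻¹' s) * μ (X q ⁻¹' t) := by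
  have hind := hdep {p} {q} (by
    rintro p' hp' q' hq'
    rw [Set.mem_singleton_iff] at hp' hq'
    subst hp'; subst hq'; exact h)
  have hφ : Measurable (fun f : ({p} : Set (ℤ × ℤ)) → ℝ => f ⟨p, rfl⟩) :=
    measurable_pi_apply _
  have hψ : Measurable (fun f : ({q} : Set (ℤ × ℤ)) → ℝ => f ⟨q, rfl⟩) :=
    measurable_pi_apply _
  have hind2 : IndepFun (X p) (X q) μ := hind.comp hφ hψ
  exact hind2.measure_inter_preimage_eq_mul s t hs ht

lemma rv_cardAll (R K : ℕ) (hR : 0 < R) (S : Finset ((ℕ × ℕ) × (ℕ × ℕ)))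
    (hS : ∀ q ∈ S, q.1.1 ∈ Ioc 0 (K * R) ∧ q.1.2 ∈ Ioc 0 (K * R) ∧
      q.2.1 ∈ Ioc 0 (K * R) ∧ q.2.2 ∈ Ioc 0 (K * R) ∧
      (q.1.1 - 1) / R = (q.2.1 - 1) / R) :
    S.card ≤ (K * R) ^ 3 * R := by
  have h := Finset.card_le_card_of_injOn
    (fun q : (ℕ × ℕ) × (ℕ × ℕ) => (q.1.1, q.1.2, q.2.2, (q.2.1 - 1) % R))
    (t := Ioc 0 (K * R) ×ˢ Ioc 0 (K * R) ×ˢ Ioc 0 (K * R) ×ˢ range R)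
    (fun q hq => by
      obtain ⟨h1, h2, h3, h4, h5⟩ := hS q hq
      simp only [Finset.mem_coe, Finset.mem_product, Finset.mem_range]
      exact ⟨h1, h2, h4, Nat.mod_lt _ hR⟩)
    (by
      rintro ⟨⟨s, t⟩, ⟨u, v⟩⟩ hq ⟨⟨s', t'⟩, ⟨u', v'⟩⟩ hq' heq
      simp only [Prod.mk.injEq] at heq
      obtain ⟨e1, e2, e3, e4⟩ := heq
      obtain ⟨h1, h2, h3, h4, h5⟩ := hS _ hq
      obtain ⟨h1', h2', h3', h4', h5'⟩ := hS _ hq'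
      simp only at h1 h2 h3 h4 h5 h1' h2' h3' h4' h5' e1 e2 e3 e4
      subst e1; subst e2; subst e3
      have hu : u - 1 = u' - 1 := by
        rw [← Nat.div_add_mod (u - 1) R, ← Nat.div_add_mod (u' - 1) R, ← h5, h5', e4]
      simp only [Finset.mem_Ioc] at h3 h3'
      simp only [Prod.mk.injEq]
      exact ⟨trivial, by omega, trivial⟩)
  calc S.card ≤ _ := h
    _ ≤ (K * R) ^ 3 * R := by
        simp [Nat.card_Ioc]
        ring_nf
        omega

lemma rv_cardDiag (R K : ℕ) (hR : 0 < R) (S : Finset (ℕ × ℕ))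
    (hS : ∀ q ∈ S, q.1 ∈ Ioc 0 (K * R) ∧ q.2 ∈ Ioc 0 (K * R) ∧
      (q.1 - 1) / R = (q.2 - 1) / R) :
    S.card ≤ K * R * R := by
  have h := Finset.card_le_card_of_injOn
    (fun q : ℕ × ℕ => (q.1, (q.2 - 1) % R))
    (t := Ioc 0 (K * R) ×ˢ range R)
    (fun q hq => by
      obtain ⟨h1, h2, h3⟩ := hS q hq
      simp only [Finset.mem_coe, Finset.mem_product, Finset.mem_range]
      exact ⟨h1, Nat.mod_lt _ hR⟩)
    (by
      rintro ⟨s, t⟩ hq ⟨s', t'⟩ hq' heq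
      simp only [Prod.mk.injEq] at heq
      obtain ⟨e1, e2⟩ := heq
      obtain ⟨h1, h2, h3⟩ := hS _ hq
      obtain ⟨h1', h2', h3'⟩ := hS _ hq'
      simp only at h1 h2 h3 h1' h2' h3' e1 e2
      subst e1
      have ht : t - 1 = t' - 1 := by
        rw [← Nat.div_add_mod (t - 1) R, ← Nat.div_add_mod (t' - 1) R, ← h3, h3', e2]
      simp only [Finset.mem_Ioc] at h2 h2'
      simp only [Prod.mk.injEq]
      exact ⟨trivial, by omega⟩)
  calc S.card ≤ _ := h
    _ ≤ K * R * R := by simp [Nat.card_Ioc, mul_assoc]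

lemma rv_cardCase2 (m R K : ℕ) (hR : 0 < R) (S : Finset ((ℕ × ℕ) × (ℕ × ℕ)))
    (hS : ∀ q ∈ S, q.1.1 ∈ Ioc 0 (K * R) ∧ q.1.2 ∈ Ioc 0 (K * R) ∧
      q.2.1 ∈ Ioc 0 (K * R) ∧ q.2.2 ∈ Ioc 0 (K * R) ∧
      (q.1.1 - 1) / R = (q.2.1 - 1) / R ∧
      (q.1.1 ≤ q.2.2 + m ∧ q.2.2 ≤ q.1.1 + m) ∧ (q.1.2 ≤ q.2.1 + m ∧ q.2.1 ≤ q.1.2 + m)) :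
    S.card ≤ K * R * ((2 * m + 1) * ((2 * m + 1) * R)) := by
  have h := Finset.card_le_card_of_injOn
    (fun q : (ℕ × ℕ) × (ℕ × ℕ) => (q.2.1, q.1.2 + m - q.2.1, q.2.2 + m - q.1.1, (q.1.1 - 1) % R))
    (t := Ioc 0 (K * R) ×ˢ range (2 * m + 1) ×ˢ range (2 * m + 1) ×ˢ range R)
    (fun q hq => by
      obtain ⟨h1, h2, h3, h4, h5, h6, h7⟩ := hS q hq
      simp only [Finset.mem_coe, Finset.mem_product, Finset.mem_range]
      refine ⟨h3, by omega, by omega, Nat.mod_lt _ hR⟩)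
    (by
      rintro ⟨⟨s, t⟩, ⟨u, v⟩⟩ hq ⟨⟨s', t'⟩, ⟨u', v'⟩⟩ hq' heq
      simp only [Prod.mk.injEq] at heq
      obtain ⟨e1, e2, e3, e4⟩ := heq
      obtain ⟨h1, h2, h3, h4, h5, h6, h7⟩ := hS _ hq
      obtain ⟨h1', h2', h3', h4', h5', h6', h7'⟩ := hS _ hq'
      simp only [Finset.mem_Ioc] at h1 h2 h3 h4 h1' h2' h3' h4'
      simp only at h5 h6 h7 h5' h6' h7' e1 e2 e3 e4
      subst e1
      have ht : t = t' := by omega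
      have hs : s = s' := by
        have : s - 1 = s' - 1 := by
          rw [← Nat.div_add_mod (s - 1) R, ← Nat.div_add_mod (s' - 1) R, h5, ← h5', e4]
        omega
      simp only [Prod.mk.injEq]
      refine ⟨⟨hs, ht⟩, trivial, by omega⟩)
  calc S.card ≤ _ := h
    _ ≤ _ := by simp [Nat.card_Ioc, mul_assoc]

lemma rv_windowFacts (R : ℕ) (hR : 0 < R) (t v : ℕ) (ht : 0 < t) (hv : 0 < v)
    (hne : (t - 1) / R ≠ (v - 1) / R) :
    min t v ≤ ((max t v - 1) / R) * R ∧ ((max t v - 1) / R) * R < max t v := by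
  have hle : (min t v - 1) / R ≤ (max t v - 1) / R :=
    Nat.div_le_div_right (by omega)
  have hne' : (min t v - 1) / R ≠ (max t v - 1) / R := by
    rcases le_total t v with h | h
    · rwa [min_eq_left h, max_eq_right h]
    · rw [min_eq_right h, max_eq_left h]; exact Ne.symm hne
  have hlt := lt_of_le_of_ne hle hne'
  have h1 : min t v - 1 < ((max t v - 1) / R) * R :=
    (Nat.div_lt_iff_lt_mul hR).mp hlt
  have h2 : ((max t v - 1) / R) * R ≤ max t v - 1 := Nat.div_mul_le_self _ _
  omega

lemma rv_cardCase1 (m R K : ℕ) (hR : 0 < R) (S : Finset ((ℕ × ℕ) × (ℕ × ℕ)))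
    (hS : ∀ q ∈ S, q.1.1 ∈ Ioc 0 (K * R) ∧ q.1.2 ∈ Ioc 0 (K * R) ∧
      q.2.1 ∈ Ioc 0 (K * R) ∧ q.2.2 ∈ Ioc 0 (K * R) ∧
      (q.1.2 - 1) / R ≠ (q.2.2 - 1) / R ∧
      (q.1.1 ≤ q.2.1 + m ∧ q.2.1 ≤ q.1.1 + m) ∧ (q.1.2 ≤ q.2.2 + m ∧ q.2.2 ≤ q.1.2 + m)) :
    S.card ≤ (K + 1) * (2 * m * ((2 * m + 1) * (K * R * (2 * m + 1)))) := by
  have key : ∀ q ∈ S, min q.1.2 q.2.2 ≤ ((max q.1.2 q.2.2 - 1) / R) * R ∧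
      ((max q.1.2 q.2.2 - 1) / R) * R < max q.1.2 q.2.2 := by
    intro q hq
    obtain ⟨h1, h2, h3, h4, h5, h6, h7⟩ := hS q hq
    simp only [Finset.mem_Ioc] at h2 h4
    exact rv_windowFacts R hR _ _ (by omega) (by omega) h5
  have h := Finset.card_le_card_of_injOn
    (fun q : (ℕ × ℕ) × (ℕ × ℕ) =>
      ((max q.1.2 q.2.2 - 1) / R, q.1.2 + m - ((max q.1.2 q.2.2 - 1) / R) * R,
        q.2.2 + m - q.1.2, q.1.1, q.2.1 + m - q.1.1))
    (t := range (K + 1) ×ˢ Icc 1 (2 * m) ×ˢ range (2 * m + 1) ×ˢ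
      Ioc 0 (K * R) ×ˢ range (2 * m + 1))
    (fun q hq => by
      obtain ⟨h1, h2, h3, h4, h5, h6, h7⟩ := hS q hq
      obtain ⟨hw1, hw2⟩ := key q hq
      simp only [Finset.mem_Ioc] at h1 h2 h3 h4
      simp only [Finset.mem_coe, Finset.mem_product, Finset.mem_range, Finset.mem_Icc, Finset.mem_Ioc]
      have hBK : (max q.1.2 q.2.2 - 1) / R < K + 1 := by
        have hz : max q.1.2 q.2.2 ≤ K * R := by omega
        have h9 : ((max q.1.2 q.2.2 - 1) / R) * R < K * R := by omega
        have := lt_of_mul_lt_mul_right h9 (Nat.zero_le R)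
        omega
      refine ⟨hBK, ⟨by omega, by omega⟩, by omega, ⟨by omega, by omega⟩, by omega⟩)
    (by
      rintro ⟨⟨s, t⟩, ⟨u, v⟩⟩ hq ⟨⟨s', t'⟩, ⟨u', v'⟩⟩ hq' heq
      simp only [Prod.mk.injEq] at heq
      obtain ⟨e1, e2, e3, e4, e5⟩ := heq
      obtain ⟨h1, h2, h3, h4, h5, h6, h7⟩ := hS _ hq
      obtain ⟨h1', h2', h3', h4', h5', h6', h7'⟩ := hS _ hq'
      obtain ⟨hw1, hw2⟩ := key _ hq
      obtain ⟨hw1', hw2'⟩ := key _ hq'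
      simp only [Finset.mem_Ioc] at h1 h2 h3 h4 h1' h2' h3' h4'
      simp only at h5 h6 h7 h5' h6' h7' e1 e2 e3 e4 e5 hw1 hw2 hw1' hw2'
      subst e4
      simp only [Prod.mk.injEq]
      have ht : t = t' := by rw [e1] at e2; omega
      refine ⟨⟨trivial, ht⟩, by omega, by omega⟩)
  calc S.card ≤ _ := h
    _ ≤ _ := by simp [Nat.card_Ioc, mul_assoc]

/-- The sorted (symmetrized) index of a pair of natural positions. -/
def rvσ (p : ℕ × ℕ) : ℤ × ℤ := (((min p.1 p.2 : ℕ) : ℤ), ((max p.1 p.2 : ℕ) : ℤ))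

lemma rv_symX_min {Ω : Type*} (X : ℤ × ℤ → Ω → ℝ) (s t : ℕ) (ω : Ω) :
    symX X (s : ℤ) (t : ℤ) ω = X (rvσ (s, t)) ω := by
  unfold symX rvσ
  split_ifs with h
  · have h' : s ≤ t := by exact_mod_cast h
    simp only [min_eq_left h', max_eq_right h']
  · push_neg at h
    have h' : t ≤ s := by exact_mod_cast h.le
    simp only [min_eq_right h', max_eq_left h']

lemma rv_blockIdx (R K i s : ℕ) (hR : 0 < R) (hi : i ∈ Finset.Icc 1 K)
    (hs : s ∈ Finset.Ioc ((i - 1) * R) (i * R)) :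
    s ∈ Finset.Ioc 0 (K * R) ∧ (s - 1) / R = i - 1 := by
  simp only [Finset.mem_Icc] at hi
  simp only [Finset.mem_Ioc] at hs ⊢
  have hiK : i * R ≤ K * R := Nat.mul_le_mul_right R hi.2
  refine ⟨⟨by omega, by omega⟩, ?_⟩
  apply Nat.div_eq_of_lt_le
  · omega
  · have h1 : (i - 1) + 1 = i := by omega
    rw [h1]
    omega

lemma rv_farSep (m : ℕ) (s t u v : ℕ)
    (h : ¬(((s ≤ u + m ∧ u ≤ s + m) ∧ (t ≤ v + m ∧ v ≤ t + m)) ∨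
      ((s ≤ v + m ∧ v ≤ s + m) ∧ (t ≤ u + m ∧ u ≤ t + m)))) :
    (m : ℤ) < max |(rvσ (s, t)).1 - (rvσ (u, v)).1| |(rvσ (s, t)).2 - (rvσ (u, v)).2| := by
  by_contra hc
  push_neg at hc
  rw [max_le_iff] at hc
  obtain ⟨c1, c2⟩ := hc
  rcases abs_le.mp c1 with ⟨a1, a2⟩
  rcases abs_le.mp c2 with ⟨b1, b2⟩
  simp only [rvσ] at a1 a2 b1 b2
  apply h
  rcases le_total s t with h1 | h1 <;> rcases le_total u v with h2 | h2 <;> omega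

end RVaux

/-- Lemma 4.1 of the paper: for a stationary m-dependent regularly varying
field with index `α ∈ (0,2)`, with probability tending to 1 (along the `n` with `r_n ∣ n`),
the matrix `Â_n^{>ε}` has at most one nonzero block in each row, and no nonzero diagonal
block. -/
theorem stmt0 {Ω : Type*} [MeasurableSpace Ω] (μ : Measure Ω) [IsProbabilityMeasure μ]
    (X : ℤ × ℤ → Ω → ℝ) (hmeas : ∀ p, Measurable (X p))
    (m : ℕ) (hstat : IsStationaryField μ X) (hdep : IsMDependent μ X m)
    (α : ℝ) (hα0 : 0 < α) (hα2 : α < 2) (hreg : IsRegVarying μ X α)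
    (a : ℕ → ℝ) (ha : IsNormSeq μ X a)
    (r : ℕ → ℕ) (hr : Tendsto r atTop atTop)
    (hrn : Tendsto (fun n : ℕ => (r n : ℝ) / (n : ℝ)) atTop (nhds 0))
    (ε : ℝ) (hε : 0 < ε) :
    Tendsto
      (fun n : ℕ => μ {ω | ∃ i ∈ Finset.Icc 1 (n / r n), ∃ j ∈ Finset.Icc 1 (n / r n),
          ∃ l ∈ Finset.Icc 1 (n / r n), j ≠ l ∧
          blockExceed X (a (n ^ 2)) (r n) i j ε ω ∧ blockExceed X (a (n ^ 2)) (r n) i l ε ω})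
      (atTop ⊓ Filter.principal {n : ℕ | r n ∣ n}) (nhds 0) ∧
    Tendsto
      (fun n : ℕ => μ {ω | ∃ i ∈ Finset.Icc 1 (n / r n),
          blockExceed X (a (n ^ 2)) (r n) i i ε ω})
      (atTop ⊓ Filter.principal {n : ℕ | r n ∣ n}) (nhds 0) := by
  classical
  have hεα : 0 < ε ^ (-α) := Real.rpow_pos_of_pos hε (-α)
  set C : ℝ := ε ^ (-α) + 1 with hCdef
  have hC0 : 0 < C := by rw [hCdef]; linarith
  have hsq : Tendsto (fun n : ℕ => n ^ 2) atTop atTop :=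
    tendsto_atTop_mono (fun n => Nat.le_self_pow two_ne_zero n) tendsto_id
  have hbpos : ∀ᶠ n : ℕ in atTop, 0 < a (n ^ 2) :=
    (ha.1.comp hsq).eventually (eventually_gt_atTop 0)
  have hG : ∀ n : ℕ, MeasurableSet {y : ℝ | ε < |y / a (n ^ 2)|} := fun n =>
    measurableSet_lt measurable_const ((measurable_id.div_const _).abs)
  have hθeq : ∀ n : ℕ, ∀ p : ℤ × ℤ,
      μ (X p ⁻¹' {y : ℝ | ε < |y / a (n ^ 2)|}) =
        μ (X (0, 0) ⁻¹' {y : ℝ | ε < |y / a (n ^ 2)|}) := by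
    intro n p
    rw [← Measure.map_apply (hmeas p) (hG n), ← Measure.map_apply (hmeas _) (hG n),
      rv_lawEq μ X hmeas hstat p]
  have hTC : ∀ᶠ n : ℕ in atTop,
      (n : ℝ) ^ 2 * (μ {ω | ε * a (n ^ 2) < |X (0, 0) ω|}).toReal < C :=
    (rv_tailLim μ X α hreg a ha ε hε).eventually_lt_const (by rw [hCdef]; linarith)
  have hFbound : ∀ᶠ n : ℕ in atTop, ∀ p : ℤ × ℤ,
      μ (X p ⁻¹' {y : ℝ | ε < |y / a (n ^ 2)|}) ≤ ENNReal.ofReal (C / (n : ℝ) ^ 2) := by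
    filter_upwards [hbpos, hTC, eventually_gt_atTop 0] with n hb hTn hn p
    rw [hθeq n p]
    have e2 : X (0, 0) ⁻¹' {y : ℝ | ε < |y / a (n ^ 2)|} =
        {ω | ε * a (n ^ 2) < |X (0, 0) ω|} := by
      ext ω
      simp only [Set.mem_preimage, Set.mem_setOf_eq, abs_div, abs_of_pos hb, lt_div_iff₀ hb]
    rw [e2, ← ENNReal.ofReal_toReal (measure_ne_top μ _)]
    apply ENNReal.ofReal_le_ofReal
    have hn0 : (0 : ℝ) < (n : ℝ) := Nat.cast_pos.mpr hn
    have hn2 : (0 : ℝ) < (n : ℝ) ^ 2 := by positivity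
    rw [le_div_iff₀ hn2]
    nlinarith [hTn]
  have hRlim : Tendsto (fun n : ℕ => 1 / (r n : ℝ)) atTop (nhds 0) := by
    have h1 : Tendsto (fun n : ℕ => ((r n : ℝ))) atTop atTop :=
      tendsto_natCast_atTop_atTop.comp hr
    simpa [one_div, Pi.inv_def] using h1.inv_tendsto_atTop
  have hnlim : Tendsto (fun n : ℕ => 1 / (n : ℝ)) atTop (nhds 0) :=
    tendsto_one_div_atTop_nhds_zero_nat
  have hKlim : Tendsto (fun n : ℕ => (((n / r n : ℕ) : ℝ) + 1) / (n : ℝ)) atTop (nhds 0) := by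
    have hg : Tendsto (fun n : ℕ => 1 / (r n : ℝ) + 1 / (n : ℝ)) atTop (nhds 0) := by
      simpa using hRlim.add hnlim
    apply squeeze_zero' ?_ ?_ hg
    · filter_upwards [eventually_gt_atTop 0] with n hn
      positivity
    · filter_upwards [eventually_gt_atTop 0, hr.eventually (eventually_ge_atTop 1)] with n hn hR
      have hn0 : (0 : ℝ) < (n : ℝ) := Nat.cast_pos.mpr hn
      have hR0 : (0 : ℝ) < (r n : ℝ) := by exact_mod_cast hR
      have hK : ((n / r n : ℕ) : ℝ) ≤ (n : ℝ) / (r n : ℝ) := Nat.cast_div_le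
      calc (((n / r n : ℕ) : ℝ) + 1) / (n : ℝ) ≤ ((n : ℝ) / (r n : ℝ) + 1) / (n : ℝ) := by
            gcongr
        _ = 1 / (r n : ℝ) + 1 / (n : ℝ) := by field_simp
  constructor
  · -- part (i)
    apply Tendsto.mono_left ?_ inf_le_left
    have hupper : Tendsto (fun n : ℕ => ENNReal.ofReal
        ((2 * (m : ℝ) * (2 * (m : ℝ) + 1) ^ 2 * C) * ((((n / r n : ℕ) : ℝ) + 1) / (n : ℝ)) +
          (((2 * (m : ℝ) + 1) ^ 2 * C) * ((r n : ℝ) / (n : ℝ)) +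
            C ^ 2 * ((r n : ℝ) / (n : ℝ))))) atTop (nhds 0) := by
      have hre : Tendsto (fun n : ℕ =>
          (2 * (m : ℝ) * (2 * (m : ℝ) + 1) ^ 2 * C) * ((((n / r n : ℕ) : ℝ) + 1) / (n : ℝ)) +
            (((2 * (m : ℝ) + 1) ^ 2 * C) * ((r n : ℝ) / (n : ℝ)) +
              C ^ 2 * ((r n : ℝ) / (n : ℝ)))) atTop (nhds 0) := by
        have t1 := hKlim.const_mul (2 * (m : ℝ) * (2 * (m : ℝ) + 1) ^ 2 * C)
        have t2 := hrn.const_mul ((2 * (m : ℝ) + 1) ^ 2 * C)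
        have t3 := hrn.const_mul (C ^ 2)
        simpa using t1.add (t2.add t3)
      simpa using ENNReal.tendsto_ofReal hre
    apply tendsto_of_tendsto_of_tendsto_of_le_of_le' tendsto_const_nhds hupper
      (Eventually.of_forall fun n => zero_le)
    filter_upwards [hFbound, eventually_gt_atTop 0, hr.eventually (eventually_ge_atTop 1)]
      with n hFb hn hR1
    set R := r n with hRdef
    set K := n / r n with hKdef
    have hRpos : 0 < R := hR1
    have hNn : K * R ≤ n := Nat.div_mul_le_self n R
    have hn0 : (0 : ℝ) < (n : ℝ) := Nat.cast_pos.mpr hn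
    have hB0 : (0 : ℝ) ≤ C / (n : ℝ) ^ 2 := div_nonneg hC0.le (by positivity)
    set G : Set ℝ := {y : ℝ | ε < |y / a (n ^ 2)|} with hGdef
    set B : ENNReal := ENNReal.ofReal (C / (n : ℝ) ^ 2) with hBdef
    set S : Finset ((ℕ × ℕ) × (ℕ × ℕ)) :=
      ((Finset.Ioc 0 (K * R) ×ˢ Finset.Ioc 0 (K * R)) ×ˢ
        (Finset.Ioc 0 (K * R) ×ˢ Finset.Ioc 0 (K * R))).filter
        (fun q => (q.1.1 - 1) / R = (q.2.1 - 1) / R ∧ (q.1.2 - 1) / R ≠ (q.2.2 - 1) / R)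
      with hSdef
    have hSmem : ∀ q ∈ S, q.1.1 ∈ Finset.Ioc 0 (K * R) ∧ q.1.2 ∈ Finset.Ioc 0 (K * R) ∧
        q.2.1 ∈ Finset.Ioc 0 (K * R) ∧ q.2.2 ∈ Finset.Ioc 0 (K * R) ∧
        (q.1.1 - 1) / R = (q.2.1 - 1) / R ∧ (q.1.2 - 1) / R ≠ (q.2.2 - 1) / R := by
      intro q hq
      simp only [hSdef, Finset.mem_filter, Finset.mem_product] at hq
      exact ⟨hq.1.1.1, hq.1.1.2, hq.1.2.1, hq.1.2.2, hq.2.1, hq.2.2⟩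
    have hincl : {ω | ∃ i ∈ Finset.Icc 1 (n / r n), ∃ j ∈ Finset.Icc 1 (n / r n),
        ∃ l ∈ Finset.Icc 1 (n / r n), j ≠ l ∧
        blockExceed X (a (n ^ 2)) (r n) i j ε ω ∧ blockExceed X (a (n ^ 2)) (r n) i l ε ω} ⊆
        ⋃ q ∈ S, (X (rvσ q.1) ⁻¹' G ∩ X (rvσ q.2) ⁻¹' G) := by
      rintro ω ⟨i, hi, j, hj, l, hl, hjl, hbx1, hbx2⟩
      obtain ⟨s, hs, t, ht, hst⟩ := hbx1
      obtain ⟨u, hu, v, hv, huv⟩ := hbx2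
      have Hs := rv_blockIdx R K i s hRpos hi hs
      have Ht := rv_blockIdx R K j t hRpos hj ht
      have Hu := rv_blockIdx R K i u hRpos hi hu
      have Hv := rv_blockIdx R K l v hRpos hl hv
      apply Set.mem_iUnion₂.mpr
      refine ⟨((s, t), (u, v)), ?_, ?_, ?_⟩
      · simp only [hSdef, Finset.mem_filter, Finset.mem_product]
        refine ⟨⟨⟨Hs.1, Ht.1⟩, Hu.1, Hv.1⟩, by rw [Hs.2, Hu.2], ?_⟩
        rw [Ht.2, Hv.2]
        simp only [Finset.mem_Icc] at hj hl
        omega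
      · show ω ∈ X (rvσ (s, t)) ⁻¹' G
        simp only [Set.mem_preimage, hGdef, Set.mem_setOf_eq]
        rw [← rv_symX_min X s t ω]
        exact hst
      · show ω ∈ X (rvσ (u, v)) ⁻¹' G
        simp only [Set.mem_preimage, hGdef, Set.mem_setOf_eq]
        rw [← rv_symX_min X u v ω]
        exact huv
    have hnear : ∀ q ∈ S, μ (X (rvσ q.1) ⁻¹' G ∩ X (rvσ q.2) ⁻¹' G) ≤ B := fun q _ =>
      le_trans (measure_mono Set.inter_subset_left) (hFb _)
    set P1 : (ℕ × ℕ) × (ℕ × ℕ) → Prop := fun q =>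
      (q.1.1 ≤ q.2.1 + m ∧ q.2.1 ≤ q.1.1 + m) ∧ (q.1.2 ≤ q.2.2 + m ∧ q.2.2 ≤ q.1.2 + m)
      with hP1def
    set P2 : (ℕ × ℕ) × (ℕ × ℕ) → Prop := fun q =>
      (q.1.1 ≤ q.2.2 + m ∧ q.2.2 ≤ q.1.1 + m) ∧ (q.1.2 ≤ q.2.1 + m ∧ q.2.1 ≤ q.1.2 + m)
      with hP2def
    have hfar : ∀ q ∈ S.filter (fun q => ¬(P1 q ∨ P2 q)),
        μ (X (rvσ q.1) ⁻¹' G ∩ X (rvσ q.2) ⁻¹' G) ≤ B ^ 2 := by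
      intro q hq
      simp only [Finset.mem_filter] at hq
      obtain ⟨hqS, hqfar⟩ := hq
      have hsep := rv_farSep m q.1.1 q.1.2 q.2.1 q.2.2 (by
        simpa [hP1def, hP2def] using hqfar)
      rw [rv_indepPair μ X m hdep _ _ hsep G G (hG n) (hG n), sq]
      exact mul_le_mul' (hFb _) (hFb _)
    have hc1 : (S.filter P1).card ≤ (K + 1) * (2 * m * ((2 * m + 1) * (K * R * (2 * m + 1)))) := by
      apply rv_cardCase1 m R K hRpos
      intro q hq
      simp only [Finset.mem_filter] at hq
      obtain ⟨m1, m2, m3, m4, m5, m6⟩ := hSmem q hq.1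
      exact ⟨m1, m2, m3, m4, m6, hq.2.1, hq.2.2⟩
    have hc2 : (S.filter P2).card ≤ K * R * ((2 * m + 1) * ((2 * m + 1) * R)) := by
      apply rv_cardCase2 m R K hRpos
      intro q hq
      simp only [Finset.mem_filter] at hq
      obtain ⟨m1, m2, m3, m4, m5, m6⟩ := hSmem q hq.1
      exact ⟨m1, m2, m3, m4, m5, hq.2.1, hq.2.2⟩
    have hc3 : (S.filter (fun q => ¬(P1 q ∨ P2 q))).card ≤ (K * R) ^ 3 * R := by
      apply rv_cardAll R K hRpos
      intro q hq
      simp only [Finset.mem_filter] at hq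
      obtain ⟨m1, m2, m3, m4, m5, m6⟩ := hSmem q hq.1
      exact ⟨m1, m2, m3, m4, m5⟩
    have hcnear : (S.filter (fun q => P1 q ∨ P2 q)).card ≤
        (K + 1) * (2 * m * ((2 * m + 1) * (K * R * (2 * m + 1)))) +
          K * R * ((2 * m + 1) * ((2 * m + 1) * R)) := by
      calc (S.filter (fun q => P1 q ∨ P2 q)).card
          ≤ (S.filter P1).card + (S.filter P2).card := by
            rw [Finset.filter_or]; exact Finset.card_union_le _ _
        _ ≤ _ := Nat.add_le_add hc1 hc2
    -- three ENNReal term bounds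
    have hT1 : (((K + 1) * (2 * m * ((2 * m + 1) * (K * R * (2 * m + 1)))) : ℕ)) • B ≤
        ENNReal.ofReal ((2 * (m : ℝ) * (2 * (m : ℝ) + 1) ^ 2 * C) * (((K : ℝ) + 1) / (n : ℝ))) := by
      rw [nsmul_eq_mul, hBdef, ← ENNReal.ofReal_natCast, ← ENNReal.ofReal_mul (Nat.cast_nonneg _)]
      apply ENNReal.ofReal_le_ofReal
      have hb1 : (((K + 1) * (2 * m * ((2 * m + 1) * (K * R * (2 * m + 1)))) : ℕ) : ℝ) ≤
          (((K + 1) * (2 * m * ((2 * m + 1) * (n * (2 * m + 1)))) : ℕ) : ℝ) := by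
        apply Nat.cast_le.mpr
        gcongr
      calc (((K + 1) * (2 * m * ((2 * m + 1) * (K * R * (2 * m + 1)))) : ℕ) : ℝ) *
            (C / (n : ℝ) ^ 2)
          ≤ (((K + 1) * (2 * m * ((2 * m + 1) * (n * (2 * m + 1)))) : ℕ) : ℝ) *
            (C / (n : ℝ) ^ 2) := mul_le_mul_of_nonneg_right hb1 hB0
        _ = (2 * (m : ℝ) * (2 * (m : ℝ) + 1) ^ 2 * C) * (((K : ℝ) + 1) / (n : ℝ)) := by
            push_cast
            field_simp
    have hT2 : ((K * R * ((2 * m + 1) * ((2 * m + 1) * R)) : ℕ)) • B ≤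
        ENNReal.ofReal (((2 * (m : ℝ) + 1) ^ 2 * C) * ((R : ℝ) / (n : ℝ))) := by
      rw [nsmul_eq_mul, hBdef, ← ENNReal.ofReal_natCast, ← ENNReal.ofReal_mul (Nat.cast_nonneg _)]
      apply ENNReal.ofReal_le_ofReal
      have hb1 : ((K * R * ((2 * m + 1) * ((2 * m + 1) * R)) : ℕ) : ℝ) ≤
          ((n * ((2 * m + 1) * ((2 * m + 1) * R)) : ℕ) : ℝ) := by
        apply Nat.cast_le.mpr
        gcongr
      calc ((K * R * ((2 * m + 1) * ((2 * m + 1) * R)) : ℕ) : ℝ) * (C / (n : ℝ) ^ 2)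
          ≤ ((n * ((2 * m + 1) * ((2 * m + 1) * R)) : ℕ) : ℝ) * (C / (n : ℝ) ^ 2) :=
            mul_le_mul_of_nonneg_right hb1 hB0
        _ = ((2 * (m : ℝ) + 1) ^ 2 * C) * ((R : ℝ) / (n : ℝ)) := by
            push_cast
            field_simp
    have hT3 : (((K * R) ^ 3 * R : ℕ)) • B ^ 2 ≤
        ENNReal.ofReal (C ^ 2 * ((R : ℝ) / (n : ℝ))) := by
      rw [nsmul_eq_mul, hBdef, ← ENNReal.ofReal_pow hB0, ← ENNReal.ofReal_natCast,
        ← ENNReal.ofReal_mul (Nat.cast_nonneg _)]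
      apply ENNReal.ofReal_le_ofReal
      have hb1 : (((K * R) ^ 3 * R : ℕ) : ℝ) ≤ ((n ^ 3 * R : ℕ) : ℝ) := by
        apply Nat.cast_le.mpr
        gcongr
      calc (((K * R) ^ 3 * R : ℕ) : ℝ) * (C / (n : ℝ) ^ 2) ^ 2
          ≤ ((n ^ 3 * R : ℕ) : ℝ) * (C / (n : ℝ) ^ 2) ^ 2 :=
            mul_le_mul_of_nonneg_right hb1 (by positivity)
        _ = C ^ 2 * ((R : ℝ) / (n : ℝ)) := by
            push_cast
            field_simp
    calc μ {ω | ∃ i ∈ Finset.Icc 1 (n / r n), ∃ j ∈ Finset.Icc 1 (n / r n),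
          ∃ l ∈ Finset.Icc 1 (n / r n), j ≠ l ∧
          blockExceed X (a (n ^ 2)) (r n) i j ε ω ∧ blockExceed X (a (n ^ 2)) (r n) i l ε ω}
        ≤ μ (⋃ q ∈ S, (X (rvσ q.1) ⁻¹' G ∩ X (rvσ q.2) ⁻¹' G)) := measure_mono hincl
      _ ≤ ∑ q ∈ S, μ (X (rvσ q.1) ⁻¹' G ∩ X (rvσ q.2) ⁻¹' G) :=
          measure_biUnion_finset_le S _
      _ = ∑ q ∈ S.filter (fun q => P1 q ∨ P2 q), μ (X (rvσ q.1) ⁻¹' G ∩ X (rvσ q.2) ⁻¹' G) +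
          ∑ q ∈ S.filter (fun q => ¬(P1 q ∨ P2 q)),
            μ (X (rvσ q.1) ⁻¹' G ∩ X (rvσ q.2) ⁻¹' G) :=
          (Finset.sum_filter_add_sum_filter_not S _ _).symm
      _ ≤ (S.filter (fun q => P1 q ∨ P2 q)).card • B +
          (S.filter (fun q => ¬(P1 q ∨ P2 q))).card • B ^ 2 :=
          add_le_add
            (Finset.sum_le_card_nsmul _ _ _ (fun q hq => hnear q (Finset.mem_of_mem_filter q hq)))
            (Finset.sum_le_card_nsmul _ _ _ hfar)
      _ ≤ ((K + 1) * (2 * m * ((2 * m + 1) * (K * R * (2 * m + 1)))) +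
            K * R * ((2 * m + 1) * ((2 * m + 1) * R)) : ℕ) • B +
          ((K * R) ^ 3 * R : ℕ) • B ^ 2 := by
          apply add_le_add
          · simp only [nsmul_eq_mul]
            exact mul_le_mul' (Nat.cast_le.mpr hcnear) le_rfl
          · simp only [nsmul_eq_mul]
            exact mul_le_mul' (Nat.cast_le.mpr hc3) le_rfl
      _ ≤ (ENNReal.ofReal ((2 * (m : ℝ) * (2 * (m : ℝ) + 1) ^ 2 * C) * (((K : ℝ) + 1) / (n : ℝ))) +
            ENNReal.ofReal (((2 * (m : ℝ) + 1) ^ 2 * C) * ((R : ℝ) / (n : ℝ)))) +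
          ENNReal.ofReal (C ^ 2 * ((R : ℝ) / (n : ℝ))) := by
          apply add_le_add ?_ hT3
          rw [add_nsmul]
          exact add_le_add hT1 hT2
      _ = ENNReal.ofReal
            ((2 * (m : ℝ) * (2 * (m : ℝ) + 1) ^ 2 * C) * (((K : ℝ) + 1) / (n : ℝ)) +
              (((2 * (m : ℝ) + 1) ^ 2 * C) * ((R : ℝ) / (n : ℝ)) +
                C ^ 2 * ((R : ℝ) / (n : ℝ)))) := by
          rw [ENNReal.ofReal_add (by positivity) (by positivity),
            ENNReal.ofReal_add (by positivity) (by positivity), add_assoc]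
  · -- part (ii)
    apply Tendsto.mono_left ?_ inf_le_left
    have hupper : Tendsto (fun n : ℕ => ENNReal.ofReal (C * ((r n : ℝ) / (n : ℝ))))
        atTop (nhds 0) := by
      have hre := hrn.const_mul C
      rw [mul_zero] at hre
      simpa using ENNReal.tendsto_ofReal hre
    apply tendsto_of_tendsto_of_tendsto_of_le_of_le' tendsto_const_nhds hupper
      (Eventually.of_forall fun n => zero_le)
    filter_upwards [hFbound, eventually_gt_atTop 0, hr.eventually (eventually_ge_atTop 1)]
      with n hFb hn hR1
    set R := r n with hRdef
    set K := n / r n with hKdef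
    have hRpos : 0 < R := hR1
    have hNn : K * R ≤ n := Nat.div_mul_le_self n R
    have hn0 : (0 : ℝ) < (n : ℝ) := Nat.cast_pos.mpr hn
    have hB0 : (0 : ℝ) ≤ C / (n : ℝ) ^ 2 := div_nonneg hC0.le (by positivity)
    set G : Set ℝ := {y : ℝ | ε < |y / a (n ^ 2)|} with hGdef
    set B : ENNReal := ENNReal.ofReal (C / (n : ℝ) ^ 2) with hBdef
    set D : Finset (ℕ × ℕ) :=
      (Finset.Ioc 0 (K * R) ×ˢ Finset.Ioc 0 (K * R)).filter
        (fun p => (p.1 - 1) / R = (p.2 - 1) / R) with hDdef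
    have hincl : {ω | ∃ i ∈ Finset.Icc 1 (n / r n),
        blockExceed X (a (n ^ 2)) (r n) i i ε ω} ⊆ ⋃ p ∈ D, X (rvσ p) ⁻¹' G := by
      rintro ω ⟨i, hi, hbx⟩
      obtain ⟨s, hs, t, ht, hst⟩ := hbx
      have Hs := rv_blockIdx R K i s hRpos hi hs
      have Ht := rv_blockIdx R K i t hRpos hi ht
      apply Set.mem_iUnion₂.mpr
      refine ⟨(s, t), ?_, ?_⟩
      · simp only [hDdef, Finset.mem_filter, Finset.mem_product]
        exact ⟨⟨Hs.1, Ht.1⟩, by rw [Hs.2, Ht.2]⟩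
      · show ω ∈ X (rvσ (s, t)) ⁻¹' G
        simp only [Set.mem_preimage, hGdef, Set.mem_setOf_eq]
        rw [← rv_symX_min X s t ω]
        exact hst
    have hcD : D.card ≤ K * R * R := by
      apply rv_cardDiag R K hRpos
      intro p hp
      simp only [hDdef, Finset.mem_filter, Finset.mem_product] at hp
      exact ⟨hp.1.1, hp.1.2, hp.2⟩
    calc μ {ω | ∃ i ∈ Finset.Icc 1 (n / r n), blockExceed X (a (n ^ 2)) (r n) i i ε ω}
        ≤ μ (⋃ p ∈ D, X (rvσ p) ⁻¹' G) := measure_mono hincl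
      _ ≤ ∑ p ∈ D, μ (X (rvσ p) ⁻¹' G) := measure_biUnion_finset_le D _
      _ ≤ D.card • B := Finset.sum_le_card_nsmul _ _ _ (fun p _ => hFb _)
      _ ≤ (K * R * R : ℕ) • B := by
          simp only [nsmul_eq_mul]
          exact mul_le_mul' (Nat.cast_le.mpr hcD) le_rfl
      _ ≤ ENNReal.ofReal (C * ((R : ℝ) / (n : ℝ))) := by
          rw [nsmul_eq_mul, hBdef, ← ENNReal.ofReal_natCast,
            ← ENNReal.ofReal_mul (Nat.cast_nonneg _)]
          apply ENNReal.ofReal_le_ofReal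
          have hb1 : ((K * R * R : ℕ) : ℝ) ≤ ((n * R : ℕ) : ℝ) := by
            apply Nat.cast_le.mpr
            gcongr
          calc ((K * R * R : ℕ) : ℝ) * (C / (n : ℝ) ^ 2)
              ≤ ((n * R : ℕ) : ℝ) * (C / (n : ℝ) ^ 2) := mul_le_mul_of_nonneg_right hb1 hB0
            _ ≤ C * ((R : ℝ) / (n : ℝ)) := by
                push_cast
                apply le_of_eq
                have hn' : (n : ℝ) ≠ 0 := ne_of_gt hn0
                field_simp

end
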